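/- Let ξ, η ∈ c₀* both be summable and suppose ∑_{j=n}^∞ ξ_j ≤ ∑_{j=n}^∞ η_j for every n ≥ 1 (ξ is majorized at infinity by η). Then: (i) there exists ζ ∈ c₀* with ζ_j ≤ η_j for all j, ∑_{j=n}^∞ ξ_j ≤ ∑_{j=n}^∞ ζ_j for every n, and ∑_{j=1}^∞ ξ_j = ∑_{j=1}^∞ ζ_j; and (ii) there exists ρ ∈ c₀* with ξ_j ≤ ρ_j for all j, ∑_{j=n}^∞ ρ_j ≤ ∑_{j=n}^∞ η_j for every n, and ∑_{j=1}^∞ ρ_j = ∑_{j=1}^∞ η_j. -/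

import Mathlib

noncomputable section

open Filter Finset

/-- `ξ ∈ c₀*`: a nonnegative, nonincreasing sequence converging to `0`. -/
def IsCoStar (ξ : ℕ → ℝ) : Prop :=
  (∀ n, 0 ≤ ξ n) ∧ Antitone ξ ∧ Tendsto ξ atTop (nhds 0)

/-- The tail sum `∑_{j≥a} f j`. -/
noncomputable def tailSum (f : ℕ → ℝ) (a : ℕ) : ℝ := ∑' j, f (a + j)

lemma tailSum_summable {f : ℕ → ℝ} (hf : Summable f) (a : ℕ) :
    Summable (fun j => f (a + j)) := by
  have := (summable_nat_add_iff (f := f) a).mpr hf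
  simpa [add_comm] using this

lemma tailSum_succ {f : ℕ → ℝ} (hf : Summable f) (a : ℕ) :
    tailSum f a = f a + tailSum f (a + 1) := by
  have h1 := Summable.tsum_eq_zero_add (tailSum_summable hf a)
  have h2 : ∑' j, f (a + (j + 1)) = tailSum f (a + 1) := by
    apply tsum_congr; intro j; congr 1; omega
  simpa [tailSum, h2] using h1

lemma tailSum_nonneg {f : ℕ → ℝ} (hf : ∀ n, 0 ≤ f n) (a : ℕ) : 0 ≤ tailSum f a :=
  tsum_nonneg fun _ => hf _

lemma tailSum_tendsto {f : ℕ → ℝ} (hf : Summable f) :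
    Tendsto (tailSum f) atTop (nhds 0) := by
  have h := tendsto_sum_nat_add f
  have : (fun i => ∑' k, f (k + i)) = tailSum f := by
    funext i; exact tsum_congr fun k => by rw [add_comm]
  rwa [this] at h

lemma le_tailSum {f : ℕ → ℝ} (hf : Summable f) (hf0 : ∀ n, 0 ≤ f n) (a : ℕ) :
    f a ≤ tailSum f a := by
  have := tailSum_succ hf a
  have := tailSum_nonneg hf0 (a + 1)
  linarith

/-- telescoping tail tsum -/
lemma telescope_tsum (s : ℕ → ℝ) (hs0 : Tendsto s atTop (nhds 0))
    (hsum : Summable fun n => s n - s (n + 1)) (a : ℕ) :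
    (∑' j, (s (a + j) - s (a + j + 1))) = s a := by
  have hsummable : Summable (fun j => (s (a + j) - s (a + j + 1))) := by
    have := tailSum_summable hsum a
    simpa using this
  have hpart : ∀ m, ∑ j ∈ Finset.range m, (s (a + j) - s (a + j + 1)) = s a - s (m + a) := by
    intro m; induction m with
    | zero => simp
    | succ m ih =>
      rw [Finset.sum_range_succ, ih]
      have e1 : a + m = m + a := by omega
      have e2 : m + a + 1 = m + 1 + a := by omega
      rw [e1, e2]; ring
  have h1 : Tendsto (fun m => ∑ j ∈ Finset.range m, (s (a + j) - s (a + j + 1))) atTop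
      (nhds (∑' j, (s (a + j) - s (a + j + 1)))) := hsummable.hasSum.tendsto_sum_nat
  have h2 : Tendsto (fun m => s a - s (m + a)) atTop (nhds (s a - 0)) :=
    tendsto_const_nhds.sub (hs0.comp (tendsto_add_atTop_nat a))
  rw [sub_zero] at h2
  exact tendsto_nhds_unique h1 (by simpa only [hpart] using h2)

/-- The running minimum of the tail-sum differences. -/
noncomputable def Dm (ξ η : ℕ → ℝ) : ℕ → ℝ
  | 0 => tailSum η 0 - tailSum ξ 0
  | n + 1 => min (Dm ξ η n) (tailSum η (n + 1) - tailSum ξ (n + 1))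

theorem part_i {ξ η : ℕ → ℝ} (hξ : IsCoStar ξ) (hη : IsCoStar η)
    (hξs : Summable ξ) (hηs : Summable η)
    (h : ∀ a : ℕ, tailSum ξ a ≤ tailSum η a) :
    ∃ ζ : ℕ → ℝ, IsCoStar ζ ∧ Summable ζ ∧
      (∀ j, ζ j ≤ η j) ∧ (∀ a : ℕ, tailSum ξ a ≤ tailSum ζ a) ∧
      tailSum ξ 0 = tailSum ζ 0 := by
  obtain ⟨hξ0, hξa, hξt⟩ := hξ
  obtain ⟨hη0, hηa, hηt⟩ := hη
  set d : ℕ → ℝ := fun a => tailSum η a - tailSum ξ a with hd_def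
  set D : ℕ → ℝ := Dm ξ η with hD_def
  have hD0 : D 0 = d 0 := rfl
  have hDsucc : ∀ n, D (n + 1) = min (D n) (d (n + 1)) := fun n => rfl
  have hd_nonneg : ∀ a, 0 ≤ d a := fun a => by simp [hd_def, h a]
  have hd_rec : ∀ a, d a = (η a - ξ a) + d (a + 1) := by
    intro a
    have h1 := tailSum_succ hξs a
    have h2 := tailSum_succ hηs a
    simp only [hd_def]; linarith
  have hD_le_d : ∀ n, D n ≤ d n := by
    intro n; cases n with
    | zero => exact le_of_eq hD0
    | succ n => rw [hDsucc]; exact min_le_right _ _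
  have hD_nonneg : ∀ n, 0 ≤ D n := by
    intro n; induction n with
    | zero => rw [hD0]; exact hd_nonneg 0
    | succ n ih => rw [hDsucc]; exact le_min ih (hd_nonneg _)
  have hD_anti : ∀ n, D (n + 1) ≤ D n := fun n => by rw [hDsucc]; exact min_le_left _ _
  have hd_tendsto : Tendsto d atTop (nhds 0) := by
    have := (tailSum_tendsto hηs).sub (tailSum_tendsto hξs)
    simpa [hd_def] using this
  have hD_tendsto : Tendsto D atTop (nhds 0) :=
    squeeze_zero hD_nonneg hD_le_d hd_tendsto
  set ζ : ℕ → ℝ := fun n => η n - (D n - D (n + 1)) with hζ_def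
  have hζ_le : ∀ n, ζ n ≤ η n := by
    intro n; have := hD_anti n; simp only [hζ_def]; linarith
  have hζ_anti : Antitone ζ := by
    apply antitone_nat_of_succ_le
    intro n
    have hηan : η (n + 1) ≤ η n := hηa (Nat.le_succ n)
    have hξan : ξ (n + 1) ≤ ξ n := hξa (Nat.le_succ n)
    have hr1 := hd_rec n
    have hr2 := hd_rec (n + 1)
    have h1 : D (n + 1 + 1) ≤ D (n + 1) := hD_anti (n + 1)
    have h2 : D (n + 1 + 1) ≤ d (n + 1 + 1) := hD_le_d (n + 1 + 1)
    have h3 : D n ≤ d n := hD_le_d n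
    have hDs : D (n + 1) = min (D n) (d (n + 1)) := hDsucc n
    have hr2' : d (n + 1) = (η (n + 1) - ξ (n + 1)) + d (n + 1 + 1) := hr2
    rcases min_cases (D n) (d (n + 1)) with ⟨he, _⟩ | ⟨he, _⟩ <;> rw [he] at hDs <;>
      simp only [hζ_def] <;> linarith
  have hζ_tendsto : Tendsto ζ atTop (nhds 0) := by
    have h1 : Tendsto (fun n => D (n + 1)) atTop (nhds 0) :=
      hD_tendsto.comp (tendsto_add_atTop_nat 1)
    have := hηt.sub (hD_tendsto.sub h1)
    simpa [hζ_def] using this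
  have hζ0 : ∀ n, 0 ≤ ζ n := by
    intro n
    exact le_of_tendsto hζ_tendsto (eventually_atTop.2 ⟨n, fun m hm => hζ_anti hm⟩)
  have hζs : Summable ζ := Summable.of_nonneg_of_le hζ0 hζ_le hηs
  set e : ℕ → ℝ := fun n => D n - D (n + 1) with he_def
  have he0 : ∀ n, 0 ≤ e n := fun n => by have := hD_anti n; simp [he_def]; linarith
  have hes : Summable e := by
    apply summable_of_sum_range_le (c := D 0) he0
    intro m
    have : ∑ i ∈ Finset.range m, e i = D 0 - D m := Finset.sum_range_sub' D m
    rw [this]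
    have := hD_nonneg m; linarith
  have htailζ : ∀ a, tailSum ζ a = tailSum η a - D a := by
    intro a
    have hsub : tailSum ζ a = tailSum η a - ∑' j, e (a + j) := by
      have h1 : Summable (fun j => η (a + j)) := tailSum_summable hηs a
      have h2 : Summable (fun j => e (a + j)) := tailSum_summable hes a
      have h3 := Summable.tsum_sub h1 h2
      simp only [tailSum, hζ_def, he_def]
      convert h3 using 1
    have htel : ∑' j, e (a + j) = D a := by
      have : (fun j => e (a + j)) = fun j => D (a + j) - D (a + j + 1) := by
        funext j; simp [he_def]
      rw [this]
      exact telescope_tsum D hD_tendsto (by simpa [he_def] using hes) a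
    rw [hsub, htel]
  refine ⟨ζ, ⟨hζ0, hζ_anti, hζ_tendsto⟩, hζs, hζ_le, ?_, ?_⟩
  · intro a
    rw [htailζ a]
    have h1 : D a ≤ d a := hD_le_d a
    simp only [hd_def] at h1
    linarith
  · rw [htailζ 0, hD0]
    simp only [hd_def]
    ring

/-- The greedy construction for part (ii): `(gp ξ η n).1` is the remaining budget,
`(gp ξ η n).2` is the previous term of `ρ`. -/
noncomputable def gp (ξ η : ℕ → ℝ) : ℕ → ℝ × ℝ
  | 0 => (tailSum η 0, tailSum η 0)
  | n + 1 =>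
      ((gp ξ η n).1 - min (gp ξ η n).2 ((gp ξ η n).1 - tailSum ξ (n + 1)),
       min (gp ξ η n).2 ((gp ξ η n).1 - tailSum ξ (n + 1)))

theorem part_ii {ξ η : ℕ → ℝ} (hξ : IsCoStar ξ) (hη : IsCoStar η)
    (hξs : Summable ξ) (hηs : Summable η)
    (h : ∀ a : ℕ, tailSum ξ a ≤ tailSum η a) :
    ∃ ρ : ℕ → ℝ, IsCoStar ρ ∧ Summable ρ ∧
      (∀ j, ξ j ≤ ρ j) ∧ (∀ a : ℕ, tailSum ρ a ≤ tailSum η a) ∧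
      tailSum ρ 0 = tailSum η 0 := by
  obtain ⟨hξ0, hξa, hξt⟩ := hξ
  obtain ⟨hη0, hηa, hηt⟩ := hη
  set X : ℕ → ℝ := tailSum ξ with hX_def
  set H : ℕ → ℝ := tailSum η with hH_def
  set g : ℕ → ℝ := fun n => (gp ξ η n).1 with hg_def
  set p : ℕ → ℝ := fun n => (gp ξ η n).2 with hp_def
  set ρ : ℕ → ℝ := fun n => min (p n) (g n - X (n + 1)) with hρ_def
  have hg0 : g 0 = H 0 := rfl
  have hp0 : p 0 = H 0 := rfl
  have hgsucc : ∀ n, g (n + 1) = g n - ρ n := fun n => rfl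
  have hpsucc : ∀ n, p (n + 1) = ρ n := fun n => rfl
  have hXrec : ∀ n, X n = ξ n + X (n + 1) := fun n => tailSum_succ hξs n
  have hHrec : ∀ n, H n = η n + H (n + 1) := fun n => tailSum_succ hηs n
  have hXnn : ∀ n, 0 ≤ X n := fun n => tailSum_nonneg hξ0 n
  have hXg : ∀ n, X n ≤ g n := by
    intro n; cases n with
    | zero => rw [hg0]; exact h 0
    | succ n =>
      rw [hgsucc]
      have := min_le_right (p n) (g n - X (n + 1))
      simp only [hρ_def]; linarith
  have hξp : ∀ n, ξ n ≤ p n := by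
    intro n; induction n with
    | zero =>
      rw [hp0]
      exact (le_tailSum hξs hξ0 0).trans (h 0)
    | succ n ih =>
      rw [hpsucc]
      refine le_min ((hξa (Nat.le_succ n)).trans ih) ?_
      have h1 := hXrec n
      have h2 := hXg n
      have h3 := hξa (Nat.le_succ n)
      linarith
  have hξρ : ∀ n, ξ n ≤ ρ n := by
    intro n
    refine le_min (hξp n) ?_
    have h1 := hXrec n
    have h2 := hXg n
    linarith
  have hρ0 : ∀ n, 0 ≤ ρ n := fun n => (hξ0 n).trans (hξρ n)
  have hρ_anti : Antitone ρ := by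
    apply antitone_nat_of_succ_le
    intro n
    calc ρ (n + 1) ≤ p (n + 1) := min_le_left _ _
    _ = ρ n := hpsucc n
  have hQ : ∀ n, g n ≤ H n ∧ (η n ≤ p n ∨ g n = X n) := by
    intro n; induction n with
    | zero =>
      refine ⟨le_of_eq hg0, Or.inl ?_⟩
      rw [hp0]; exact le_tailSum hηs hη0 0
    | succ n ih =>
      obtain ⟨hgH, hor⟩ := ih
      rcases hor with hηp | hgX
      · rcases min_cases (p n) (g n - X (n + 1)) with ⟨he, hle⟩ | ⟨he, _⟩
        · have hρn : ρ n = p n := he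
          constructor
          · rw [hgsucc, hρn]
            have := hHrec n
            linarith
          · left
            rw [hpsucc, hρn]
            exact (hηa (Nat.le_succ n)).trans hηp
        · have hρn : ρ n = g n - X (n + 1) := he
          have hg1 : g (n + 1) = X (n + 1) := by rw [hgsucc, hρn]; ring
          exact ⟨hg1 ▸ h (n + 1), Or.inr hg1⟩
      · have hρn : ρ n = ξ n := by
          have h1 : g n - X (n + 1) = ξ n := by rw [hgX, hXrec n]; ring
          simp only [hρ_def, h1]
          exact min_eq_right (hξp n)
        have hg1 : g (n + 1) = X (n + 1) := by
          rw [hgsucc, hρn, hgX, hXrec n]; ring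
        exact ⟨hg1 ▸ h (n + 1), Or.inr hg1⟩
  have hgH : ∀ n, g n ≤ H n := fun n => (hQ n).1
  have hgnn : ∀ n, 0 ≤ g n := fun n => (hXnn n).trans (hXg n)
  have hg_tendsto : Tendsto g atTop (nhds 0) :=
    squeeze_zero hgnn hgH (tailSum_tendsto hηs)
  have hρ_eq : ∀ n, ρ n = g n - g (n + 1) := by
    intro n; rw [hgsucc]; ring
  have hρs : Summable ρ := by
    apply summable_of_sum_range_le (c := H 0) hρ0
    intro m
    have h1 : ∑ i ∈ Finset.range m, ρ i = ∑ i ∈ Finset.range m, (g i - g (i + 1)) :=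
      Finset.sum_congr rfl fun i _ => hρ_eq i
    rw [h1, Finset.sum_range_sub' g m, hg0]
    have := hgnn m; linarith
  have hρ_tendsto : Tendsto ρ atTop (nhds 0) := by
    apply squeeze_zero hρ0 (fun n => ?_) hg_tendsto
    rw [hρ_eq n]
    have := hgnn (n + 1); linarith
  have htailρ : ∀ a, tailSum ρ a = g a := by
    intro a
    have h1 : (fun j => ρ (a + j)) = fun j => g (a + j) - g (a + j + 1) := by
      funext j; exact hρ_eq (a + j)
    have h2 : Summable (fun n => g n - g (n + 1)) := by
      have : (fun n => g n - g (n + 1)) = ρ := by funext n; rw [hρ_eq n]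
      rw [this]; exact hρs
    calc tailSum ρ a = ∑' j, (g (a + j) - g (a + j + 1)) := by rw [tailSum, h1]
    _ = g a := telescope_tsum g hg_tendsto h2 a
  refine ⟨ρ, ⟨hρ0, hρ_anti, hρ_tendsto⟩, hρs, hξρ, ?_, ?_⟩
  · intro a; rw [htailρ a]; exact hgH a
  · rw [htailρ 0, hg0]

/-- If `ξ, η ∈ (ℓ¹)*` and `ξ ≺_∞ η` (tail sums of `ξ` are dominated by
those of `η`), then:
(i) there is a summable `ζ ∈ c₀*` with `ξ ≼_∞ ζ ≤ η`, and
(ii) there is a summable `ρ ∈ c₀*` with `ξ ≤ ρ ≼_∞ η`. -/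
theorem stmt_19 (ξ η : ℕ → ℝ) (hξ : IsCoStar ξ) (hη : IsCoStar η)
    (hξs : Summable ξ) (hηs : Summable η)
    (h : ∀ a : ℕ, ∑' j, ξ (a + j) ≤ ∑' j, η (a + j)) :
    (∃ ζ : ℕ → ℝ, IsCoStar ζ ∧ Summable ζ ∧ (∀ j, ζ j ≤ η j) ∧
        (∀ a : ℕ, ∑' j, ξ (a + j) ≤ ∑' j, ζ (a + j)) ∧
        (∑' j, ξ j) = (∑' j, ζ j)) ∧
    (∃ ρ : ℕ → ℝ, IsCoStar ρ ∧ Summable ρ ∧ (∀ j, ξ j ≤ ρ j) ∧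
        (∀ a : ℕ, ∑' j, ρ (a + j) ≤ ∑' j, η (a + j)) ∧
        (∑' j, ρ j) = (∑' j, η j)) := by
  have h' : ∀ a : ℕ, tailSum ξ a ≤ tailSum η a := h
  constructor
  · obtain ⟨ζ, h1, h2, h3, h4, h5⟩ := part_i ⟨hξ.1, hξ.2.1, hξ.2.2⟩ ⟨hη.1, hη.2.1, hη.2.2⟩ hξs hηs h'
    refine ⟨ζ, h1, h2, h3, h4, ?_⟩
    have e1 : tailSum ξ 0 = ∑' j, ξ j := by simp [tailSum]
    have e2 : tailSum ζ 0 = ∑' j, ζ j := by simp [tailSum]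
    rw [← e1, ← e2]; exact h5
  · obtain ⟨ρ, h1, h2, h3, h4, h5⟩ := part_ii ⟨hξ.1, hξ.2.1, hξ.2.2⟩ ⟨hη.1, hη.2.1, hη.2.2⟩ hξs hηs h'
    refine ⟨ρ, h1, h2, h3, h4, ?_⟩
    have e1 : tailSum ρ 0 = ∑' j, ρ j := by simp [tailSum]
    have e2 : tailSum η 0 = ∑' j, η j := by simp [tailSum]
    rw [← e1, ← e2]; exact h5

end
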